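/- Let L be a characteristic vector for M' and H ⊆ V ∪ {v₀} with v₀ ∈ H. Then (1/2)·(L(Σ) + Σ·Σ) − A([L|_V, H∖{v₀}]) + a_{v₀}(L,H) = b_{v₀}(L,H); in particular, since b_{v₀}(L,H) ≥ 0, the Alexander grading of U^{a_{v₀}(L,H)}⊗[L|_V, H∖{v₀}] is at most (1/2)·(L(Σ) + Σ·Σ). -/

import Mathlib

open Finset

variable {V : Type*}

/-- `M` is negative definite: `xᵀMx < 0` for every nonzero `x ∈ ℝ^V`. -/
def NegDef [Fintype V] (M : V → V → ℤ) : Prop :=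
  ∀ x : V → ℝ, x ≠ 0 → (∑ v, ∑ w, (M v w : ℝ) * x v * x w) < 0

/-- `K` is a characteristic vector for `M`: `K(v) ≡ v·v (mod 2)` for all `v`. -/
def IsChar (M : V → V → ℤ) (K : V → ℤ) : Prop :=
  ∀ v, Int.ModEq 2 (K v) (M v v)

/-- `f(K, I) = (1/2)(Σ_{v∈I} K(v) + (Σ_{v∈I} v)·(Σ_{v∈I} v))` (an exact integer division
for characteristic `K`). -/
def latF (M : V → V → ℤ) (K : V → ℤ) (I : Finset V) : ℤ :=
  ((∑ v ∈ I, K v) + ∑ v ∈ I, ∑ w ∈ I, M v w) / 2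

/-- `g(K, E) = min_{I ⊆ E} f(K, I)`. -/
def latG (M : V → V → ℤ) (K : V → ℤ) (E : Finset V) : ℤ :=
  (E.powerset.image (latF M K)).min'
    ⟨_, Finset.mem_image_of_mem _ (Finset.empty_mem_powerset E)⟩

/-- `B_v(K, E) = min { f(K, I) : v ∈ I ⊆ E }` (for `v ∈ E`). -/
def latB [DecidableEq V] (M : V → V → ℤ) (K : V → ℤ) (E : Finset V) (v : V) : ℤ :=
  ((E.erase v).powerset.image (fun I => latF M K (insert v I))).min'
    ⟨_, Finset.mem_image_of_mem _ (Finset.empty_mem_powerset _)⟩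

/-- `a_v(K,E) = A_v(K,E) - g(K,E) = g(K, E∖{v}) - g(K,E)`. -/
def lata [DecidableEq V] (M : V → V → ℤ) (K : V → ℤ) (E : Finset V) (v : V) : ℤ :=
  latG M K (E.erase v) - latG M K E

/-- `b_v(K,E) = B_v(K,E) - g(K,E)`. -/
def latb [DecidableEq V] (M : V → V → ℤ) (K : V → ℤ) (E : Finset V) (v : V) : ℤ :=
  latB M K E v - latG M K E

/-- The intersection matrix of the graph obtained by attaching the framing `m₀` to the extra
vertex `v₀ = none`, joined to `G` by the edges recorded by `e`. -/
def Mext (M : V → V → ℤ) (e : V → ℤ) (m₀ : ℤ) : Option V → Option V → ℤ := fun x y =>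
  match x, y with
  | some v, some w => M v w
  | some v, none => e v
  | none, some w => e w
  | none, none => m₀

/-- The coefficients of `Σ = v₀ + Σ_{v∈V} a_v·v`: `a = −M⁻¹e`, the unique solution of
`w·Σ = 0` for all `w ∈ V`. -/
noncomputable def sigmaC [Fintype V] [DecidableEq V] (M : V → V → ℤ) (e : V → ℤ) : V → ℚ :=
  fun v => -∑ u, ((Matrix.of fun a b => (M a b : ℚ))⁻¹ v u) * e u

/-- The rational homology class `Σ = v₀ + Σ_{v∈V} a_v·v` (coordinates). -/
noncomputable def sigmaV [Fintype V] [DecidableEq V] (M : V → V → ℤ) (e : V → ℤ) :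
    Option V → ℚ
  | none => 1
  | some v => sigmaC M e v

/-- The unique characteristic extension `L_{[K,E]}` of `K` over `v₀` (for the framing `m₀`)
with `a_{v₀}(L, E∪{v₀}) = b_{v₀}(L, E∪{v₀}) = 0`:
`L(v₀) = −m₀ + 2g(K,E) − 2g(K+2v₀*,E)`. -/
def LextV [DecidableEq V] (M : V → V → ℤ) (e : V → ℤ) (m₀ : ℤ) (K : V → ℤ) (E : Finset V) :
    Option V → ℤ
  | some v => K v
  | none => -m₀ + 2 * latG M K E - 2 * latG M (fun w => K w + 2 * e w) E

/-- The Alexander grading `A([K,E]) = (1/2)(L_{[K,E]}(Σ) + Σ·Σ)`, computed with the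
framing `m₀` on `v₀`. -/
noncomputable def AlexAt [Fintype V] [DecidableEq V] (M : V → V → ℤ) (e : V → ℤ) (m₀ : ℤ)
    (K : V → ℤ) (E : Finset V) : ℚ :=
  (1 / 2) * ((∑ x : Option V, (LextV M e m₀ K E x : ℚ) * sigmaV M e x)
    + ∑ x : Option V, ∑ y : Option V, (Mext M e m₀ x y : ℚ) * sigmaV M e x * sigmaV M e y)

/-- The Alexander grading `A([K,E])` (independent of the framing; computed with framing `0`). -/
noncomputable def Alex [Fintype V] [DecidableEq V] (M : V → V → ℤ) (e : V → ℤ)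
    (K : V → ℤ) (E : Finset V) : ℚ :=
  AlexAt M e 0 K E

/-- The set of framed vertices of `H ⊆ V ∪ {v₀}` (the restriction of `H` to `V`). -/
def resV [Fintype V] [DecidableEq V] (H : Finset (Option V)) : Finset V :=
  univ.filter (fun v => some v ∈ H)


section Aux13

variable [Fintype V] [DecidableEq V]

lemma aux_even_num (M : V → V → ℤ) (hsym : ∀ v w, M v w = M w v)
    (K : V → ℤ) (hK : IsChar M K) (I : Finset V) :
    ((∑ v ∈ I, K v) + ∑ v ∈ I, ∑ w ∈ I, M v w) % 2 = 0 := by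
  classical
  induction I using Finset.induction_on with
  | empty => simp
  | insert _ _ ha ih =>
    rename_i a s
    rw [Finset.sum_insert ha, Finset.sum_insert ha]
    simp only [Finset.sum_insert ha]
    have h2 : ∑ v ∈ s, (M v a + ∑ w ∈ s, M v w)
        = (∑ v ∈ s, M a v) + ∑ v ∈ s, ∑ w ∈ s, M v w := by
      rw [Finset.sum_add_distrib]
      congr 1
      exact Finset.sum_congr rfl fun v _ => hsym v a
    rw [h2]
    have h1 : K a % 2 = M a a % 2 := hK a
    omega

lemma aux_latF_image (M : V → V → ℤ) (e : V → ℤ) (m₀ : ℤ) (L : Option V → ℤ) (I : Finset V) :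
    latF (Mext M e m₀) L (I.image some) = latF M (fun v => L (some v)) I := by
  have hinj : ∀ x ∈ I, ∀ y ∈ I, (some x : Option V) = some y → x = y := by
    intro x _ y _ h; exact Option.some_injective _ h
  simp [latF, Finset.sum_image hinj, Mext]

lemma aux_latF_insert (M : V → V → ℤ) (hsym : ∀ v w, M v w = M w v)
    (e : V → ℤ) (m₀ : ℤ) (L : Option V → ℤ)
    (hL : IsChar (Mext M e m₀) L) (I : Finset V) :
    latF (Mext M e m₀) L (insert none (I.image some))
      = (L none + m₀) / 2 + latF M (fun v => L (some v) + 2 * e v) I := by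
  have hnone : (none : Option V) ∉ I.image some := by simp
  have hinj : ∀ x ∈ I, ∀ y ∈ I, (some x : Option V) = some y → x = y := by
    intro x _ y _ h; exact Option.some_injective _ h
  have hchar : IsChar M (fun v => L (some v) + 2 * e v) := by
    intro v
    have h := hL (some v)
    simp only [Int.ModEq, Mext] at h ⊢
    omega
  have hKe := aux_even_num M hsym _ hchar I
  have hc : (L none + m₀) % 2 = 0 := by
    have h := hL none
    simp only [Int.ModEq, Mext] at h
    omega
  rw [latF, latF, Finset.sum_insert hnone, Finset.sum_insert hnone]
  simp only [Finset.sum_insert hnone, Finset.sum_image hinj, Mext]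
  have hs1 : ∑ v ∈ I, (e v + ∑ w ∈ I, M v w)
      = (∑ v ∈ I, e v) + ∑ v ∈ I, ∑ w ∈ I, M v w := Finset.sum_add_distrib
  have hs2 : ∑ v ∈ I, (L (some v) + 2 * e v)
      = (∑ v ∈ I, L (some v)) + 2 * ∑ v ∈ I, e v := by
    rw [Finset.sum_add_distrib, Finset.mul_sum]
  rw [hs1, hs2]
  rw [hs2] at hKe
  omega

lemma aux_powerset_image (E : Finset V) (F : Finset (Option V) → ℤ) (F' : Finset V → ℤ)
    (h : ∀ I ⊆ E, F (I.image some) = F' I) :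
    (E.image some).powerset.image F = E.powerset.image F' := by
  ext n
  simp only [Finset.mem_image, Finset.mem_powerset]
  constructor
  · rintro ⟨J, hJ, rfl⟩
    refine ⟨E.filter (fun v => some v ∈ J), Finset.filter_subset _ _, ?_⟩
    have hJ' : J = (E.filter (fun v => some v ∈ J)).image some := by
      ext x
      cases x with
      | none =>
        simp only [Finset.mem_image, Finset.mem_filter]
        constructor
        · intro hx
          exact absurd (hJ hx) (by simp)
        · rintro ⟨v, _, hv⟩
          exact absurd hv (by simp)
      | some v =>
        simp only [Finset.mem_image, Finset.mem_filter, Option.some.injEq]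
        constructor
        · intro hx
          have hvE : v ∈ E := by
            have h2 := hJ hx
            simpa using h2
          exact ⟨v, ⟨hvE, hx⟩, rfl⟩
        · rintro ⟨u, ⟨_, hu⟩, rfl⟩
          exact hu
    rw [← h _ (Finset.filter_subset _ _), ← hJ']
  · rintro ⟨I, hI, rfl⟩
    exact ⟨I.image some, Finset.image_subset_image hI, h I hI⟩

lemma aux_min'_congr {s t : Finset ℤ} (h : s = t) {hs : s.Nonempty} {ht : t.Nonempty} :
    s.min' hs = t.min' ht := by subst h; rfl

lemma aux_min'_add (c : ℤ) (s : Finset ℤ) (hs : s.Nonempty)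
    (hi : (s.image (fun x => c + x)).Nonempty) :
    (s.image (fun x => c + x)).min' hi = c + s.min' hs := by
  apply le_antisymm
  · exact Finset.min'_le _ _ (Finset.mem_image_of_mem _ (s.min'_mem hs))
  · apply Finset.le_min'
    intro y hy
    obtain ⟨x, hx, rfl⟩ := Finset.mem_image.mp hy
    exact (add_le_add_iff_left c).mpr (Finset.min'_le _ _ hx)

end Aux13

/-- for `L` characteristic for `M'` and `v₀ ∈ H`,
`(1/2)(L(Σ) + Σ·Σ) − A([L|_V, H∖{v₀}]) + a_{v₀}(L,H) = b_{v₀}(L,H)`; in particular the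
Alexander grading of `U^{a_{v₀}(L,H)}⊗[L|_V, H∖{v₀}]` is at most `(1/2)(L(Σ) + Σ·Σ)`. -/
theorem stmt13 [Fintype V] [DecidableEq V] (M : V → V → ℤ)
    (hsym : ∀ v w, M v w = M w v)
    (hoff : ∀ v w, v ≠ w → M v w = 0 ∨ M v w = 1)
    (hneg : NegDef M)
    (e : V → ℤ) (he : ∀ v, e v = 0 ∨ e v = 1)
    (m₀ : ℤ) (L : Option V → ℤ) (hL : IsChar (Mext M e m₀) L)
    (H : Finset (Option V)) (hH : none ∈ H) :
    ((1 / 2) * ((∑ x : Option V, (L x : ℚ) * sigmaV M e x)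
          + ∑ x : Option V, ∑ y : Option V,
              (Mext M e m₀ x y : ℚ) * sigmaV M e x * sigmaV M e y)
        - Alex M e (fun v => L (some v)) (resV (H.erase none))
        + (lata (Mext M e m₀) L H none : ℚ)
      = (latb (Mext M e m₀) L H none : ℚ)) ∧
    (-(lata (Mext M e m₀) L H none : ℚ)
        + Alex M e (fun v => L (some v)) (resV (H.erase none))
      ≤ (1 / 2) * ((∑ x : Option V, (L x : ℚ) * sigmaV M e x)
          + ∑ x : Option V, ∑ y : Option V,
              (Mext M e m₀ x y : ℚ) * sigmaV M e x * sigmaV M e y)) := by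
  classical
  set K : V → ℤ := fun v => L (some v) with hK
  set E : Finset V := resV (H.erase none) with hE
  have herase : H.erase none = E.image some := by
    ext x
    cases x with
    | none => simp [hE, resV]
    | some v => simp [hE, resV]
  have hKchar : IsChar M K := fun v => hL (some v)
  -- claim 1 : latG over H.erase none equals latG of the restriction
  have hset1 : (H.erase none).powerset.image (latF (Mext M e m₀) L)
      = E.powerset.image (latF M K) := by
    rw [herase]
    exact aux_powerset_image E _ _ (fun I _ => aux_latF_image M e m₀ L I)
  have claim1 : latG (Mext M e m₀) L (H.erase none) = latG M K E := by
    unfold latG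
    exact aux_min'_congr hset1
  -- claim 2 : latB in terms of latG of the shifted vector
  have hset2 : (H.erase none).powerset.image (fun I => latF (Mext M e m₀) L (insert none I))
      = (E.powerset.image (latF M (fun w => K w + 2 * e w))).image
          (fun x => (L none + m₀) / 2 + x) := by
    rw [Finset.image_image, herase]
    exact aux_powerset_image E _ _ (fun I _ => aux_latF_insert M hsym e m₀ L hL I)
  have claim2 : latB (Mext M e m₀) L H none
      = (L none + m₀) / 2 + latG M (fun w => K w + 2 * e w) E := by
    unfold latB latG
    refine (aux_min'_congr hset2
      (ht := Finset.Nonempty.image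
        ⟨_, Finset.mem_image_of_mem _ (Finset.empty_mem_powerset E)⟩ _)).trans ?_
    exact aux_min'_add _ _ _ _
  -- claim 3 : 0 ≤ latb
  have hle : latG (Mext M e m₀) L H ≤ latB (Mext M e m₀) L H none := by
    unfold latG latB
    apply Finset.le_min'
    intro y hy
    obtain ⟨I, hI, rfl⟩ := Finset.mem_image.mp hy
    apply Finset.min'_le
    apply Finset.mem_image_of_mem
    rw [Finset.mem_powerset] at hI ⊢
    intro x hx
    rcases Finset.mem_insert.mp hx with rfl | hx
    · exact hH
    · exact (Finset.erase_subset _ _) (hI hx)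
  have hble : (0 : ℚ) ≤ (latb (Mext M e m₀) L H none : ℚ) := by
    have : 0 ≤ latb (Mext M e m₀) L H none := by unfold latb; omega
    exact_mod_cast this
  have hc2 : (2 : ℚ) * (((L none + m₀) / 2 : ℤ) : ℚ) = (L none : ℚ) + (m₀ : ℚ) := by
    have h := hL none
    simp only [Int.ModEq, Mext] at h
    have h2 : 2 * ((L none + m₀) / 2) = L none + m₀ := by omega
    exact_mod_cast congrArg (fun z : ℤ => (z : ℚ)) h2
  have key : ((1 : ℚ) / 2) * ((∑ x : Option V, (L x : ℚ) * sigmaV M e x)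
          + ∑ x : Option V, ∑ y : Option V,
              (Mext M e m₀ x y : ℚ) * sigmaV M e x * sigmaV M e y)
        - Alex M e K E
        + (lata (Mext M e m₀) L H none : ℚ)
      = (latb (Mext M e m₀) L H none : ℚ) := by
    simp only [Alex, AlexAt, lata, latb, claim1, claim2, LextV,
      Fintype.sum_option, sigmaV, Mext, Finset.sum_add_distrib, mul_one, one_mul]
    push_cast
    set g2 : ℚ := ((latG M (fun w => K w + 2 * e w) E : ℤ) : ℚ) with hg2
    set cc : ℚ := (((L none + m₀) / 2 : ℤ) : ℚ) with hcc
    ring_nf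
    ring_nf at hc2
    linarith [hc2]
  exact ⟨key, by linarith [key, hble]⟩
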